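/- For every fixed s ∈ (0,1], the sequence (β_n(s))_{n ≥ 0} is non-increasing in n: β_{n+1}(s) ≤ β_n(s) for all n ≥ 0. -/

import Mathlib

open MeasureTheory Real Set Filter

/-- The recursively defined sequence of functions `β_n`:
`β₀(s) = 1 - s` and `β_n(s) = ∫_s^1 (1/w)(1 - e^{-β_{n-1}(1-w)}) dw`. -/
noncomputable def beta : ℕ → ℝ → ℝ
  | 0, s => 1 - s
  | n + 1, s => ∫ w in Set.Ioc s 1, (1 / w) * (1 - Real.exp (-(beta n (1 - w))))

lemma beta_meas (n : ℕ) : Measurable (beta n) := by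
  induction n with
  | zero => exact measurable_const.sub measurable_id
  | succ n ih =>
    have hg : Measurable (fun w : ℝ => (1 / w) * (1 - Real.exp (-(beta n (1 - w))))) := by
      exact (measurable_const.div measurable_id).mul
        (measurable_const.sub ((ih.comp (measurable_const.sub measurable_id)).neg.exp))
    have heq : beta (n + 1) = fun s => ∫ w, (Set.Ioc s 1).indicator
        (fun w => (1 / w) * (1 - Real.exp (-(beta n (1 - w))))) w := by
      funext s
      rw [show beta (n + 1) s = ∫ w in Set.Ioc s 1,
        (1 / w) * (1 - Real.exp (-(beta n (1 - w)))) from rfl,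
        ← integral_indicator measurableSet_Ioc]
    rw [heq]
    have hF : Measurable (fun p : ℝ × ℝ => (Set.Ioc p.1 1).indicator
        (fun w => (1 / w) * (1 - Real.exp (-(beta n (1 - w))))) p.2) := by
      have : (fun p : ℝ × ℝ => (Set.Ioc p.1 1).indicator
          (fun w => (1 / w) * (1 - Real.exp (-(beta n (1 - w))))) p.2)
          = Set.indicator {p : ℝ × ℝ | p.1 < p.2 ∧ p.2 ≤ 1}
            (fun p => (1 / p.2) * (1 - Real.exp (-(beta n (1 - p.2))))) := by
        funext p
        by_cases h : p.2 ∈ Set.Ioc p.1 1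
        · rw [Set.indicator_of_mem h, Set.indicator_of_mem (by exact h)]
        · rw [Set.indicator_of_notMem h, Set.indicator_of_notMem (by exact h)]
      rw [this]
      exact (hg.comp measurable_snd).indicator
        ((measurableSet_lt measurable_fst measurable_snd).inter
          (measurableSet_le measurable_snd measurable_const))
    exact hF.stronglyMeasurable.integral_prod_right'.measurable

lemma beta_nonneg (n : ℕ) : ∀ s ∈ Set.Icc (0:ℝ) 1, 0 ≤ beta n s := by
  induction n with
  | zero => intro s hs; simp only [beta]; linarith [hs.2]
  | succ n ih =>
    intro s hs
    apply setIntegral_nonneg measurableSet_Ioc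
    intro w hw
    have hw0 : 0 < w := lt_of_le_of_lt hs.1 hw.1
    have h1 : 0 ≤ beta n (1 - w) := ih _ ⟨by linarith [hw.2], by linarith⟩
    have h2 : Real.exp (-(beta n (1 - w))) ≤ 1 := Real.exp_le_one_iff.mpr (by linarith)
    have h3 : 0 ≤ 1 / w := by positivity
    nlinarith

lemma beta_le (n : ℕ) : ∀ s ∈ Set.Icc (0:ℝ) 1, beta n s ≤ 1 - s := by
  induction n with
  | zero => intro s _; simp [beta]
  | succ n ih =>
    intro s hs
    have key : ∀ w ∈ Set.Ioc s 1, (1 / w) * (1 - Real.exp (-(beta n (1 - w)))) ≤ 1 := by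
      intro w hw
      have hw0 : 0 < w := lt_of_le_of_lt hs.1 hw.1
      have hmem : (1 - w) ∈ Set.Icc (0:ℝ) 1 := ⟨by linarith [hw.2], by linarith⟩
      have h1 : beta n (1 - w) ≤ w := by have := ih _ hmem; linarith
      have h2 : 1 - beta n (1 - w) ≤ Real.exp (-(beta n (1 - w))) := by
        have := Real.add_one_le_exp (-(beta n (1 - w))); linarith
      have h3 : 1 - Real.exp (-(beta n (1 - w))) ≤ w := by linarith
      have h4 : 0 ≤ 1 - Real.exp (-(beta n (1 - w))) := by
        have h0 : 0 ≤ beta n (1 - w) := beta_nonneg n _ hmem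
        have := Real.exp_le_one_iff.mpr (show -(beta n (1 - w)) ≤ 0 by linarith)
        linarith
      calc (1 / w) * (1 - Real.exp (-(beta n (1 - w))))
          ≤ (1 / w) * w := by
            apply mul_le_mul_of_nonneg_left (le_trans h3 le_rfl) (by positivity)
        _ = 1 := by field_simp
    have hnn : ∀ w ∈ Set.Ioc s 1, 0 ≤ (1 / w) * (1 - Real.exp (-(beta n (1 - w)))) := by
      intro w hw
      have hw0 : 0 < w := lt_of_le_of_lt hs.1 hw.1
      have hmem : (1 - w) ∈ Set.Icc (0:ℝ) 1 := ⟨by linarith [hw.2], by linarith⟩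
      have h0 : 0 ≤ beta n (1 - w) := beta_nonneg n _ hmem
      have h2 : Real.exp (-(beta n (1 - w))) ≤ 1 := Real.exp_le_one_iff.mpr (by linarith)
      have h3 : 0 ≤ 1 / w := by positivity
      nlinarith
    have hc : IntegrableOn (fun _ : ℝ => (1:ℝ)) (Set.Ioc s 1) := (integrableOn_const_iff).mpr
      (Or.inr (by rw [Real.volume_Ioc]; exact ENNReal.ofReal_lt_top))
    calc beta (n + 1) s
        = ∫ w in Set.Ioc s 1, (1 / w) * (1 - Real.exp (-(beta n (1 - w)))) := rfl
      _ ≤ ∫ _ in Set.Ioc s 1, (1:ℝ) := by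
          apply integral_mono_of_nonneg
          · filter_upwards [ae_restrict_mem measurableSet_Ioc] with w hw using hnn w hw
          · exact hc
          · filter_upwards [ae_restrict_mem measurableSet_Ioc] with w hw using key w hw
      _ = 1 - s := by
          rw [setIntegral_const, Real.volume_real_Ioc_of_le (by linarith [hs.2]), smul_eq_mul, mul_one]

lemma g_int (n : ℕ) (s : ℝ) (hs : s ∈ Set.Icc (0:ℝ) 1) :
    IntegrableOn (fun w => (1 / w) * (1 - Real.exp (-(beta n (1 - w))))) (Set.Ioc s 1) := by
  apply Measure.integrableOn_of_bounded (M := 1)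
  · rw [Real.volume_Ioc]; exact ENNReal.ofReal_ne_top
  · exact ((measurable_const.div measurable_id).mul
      (measurable_const.sub (((beta_meas n).comp
        (measurable_const.sub measurable_id)).neg.exp))).aestronglyMeasurable
  · filter_upwards [ae_restrict_mem measurableSet_Ioc] with w hw
    have hw0 : 0 < w := lt_of_le_of_lt hs.1 hw.1
    have hmem : (1 - w) ∈ Set.Icc (0:ℝ) 1 := ⟨by linarith [hw.2], by linarith⟩
    have h0 : 0 ≤ beta n (1 - w) := beta_nonneg n _ hmem
    have h1 : beta n (1 - w) ≤ w := by have := beta_le n _ hmem; linarith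
    have h2 : 1 - beta n (1 - w) ≤ Real.exp (-(beta n (1 - w))) := by
      have := Real.add_one_le_exp (-(beta n (1 - w))); linarith
    have h4 : Real.exp (-(beta n (1 - w))) ≤ 1 := Real.exp_le_one_iff.mpr (by linarith)
    rw [Real.norm_eq_abs, abs_le]
    constructor
    · have : 0 ≤ 1 / w := by positivity
      nlinarith
    · calc (1 / w) * (1 - Real.exp (-(beta n (1 - w))))
          ≤ (1 / w) * w := by
            apply mul_le_mul_of_nonneg_left (by linarith) (by positivity)
        _ = 1 := by field_simp

lemma beta_antitone (n : ℕ) : ∀ s ∈ Set.Icc (0:ℝ) 1, beta (n + 1) s ≤ beta n s := by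
  induction n with
  | zero =>
    intro s hs
    have := beta_le 1 s hs
    simpa [beta] using this
  | succ n ih =>
    intro s hs
    show (∫ w in Set.Ioc s 1, (1 / w) * (1 - Real.exp (-(beta (n + 1) (1 - w)))))
      ≤ ∫ w in Set.Ioc s 1, (1 / w) * (1 - Real.exp (-(beta n (1 - w))))
    apply integral_mono_of_nonneg
    · filter_upwards [ae_restrict_mem measurableSet_Ioc] with w hw
      show (0:ℝ) ≤ _
      have hw0 : 0 < w := lt_of_le_of_lt hs.1 hw.1
      have hmem : (1 - w) ∈ Set.Icc (0:ℝ) 1 := ⟨by linarith [hw.2], by linarith⟩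
      have h0 : 0 ≤ beta (n + 1) (1 - w) := beta_nonneg (n + 1) _ hmem
      have h2 : Real.exp (-(beta (n + 1) (1 - w))) ≤ 1 := Real.exp_le_one_iff.mpr (by linarith)
      have h3 : 0 ≤ 1 / w := by positivity
      nlinarith
    · exact g_int n s hs
    · filter_upwards [ae_restrict_mem measurableSet_Ioc] with w hw
      have hw0 : 0 < w := lt_of_le_of_lt hs.1 hw.1
      have hmem : (1 - w) ∈ Set.Icc (0:ℝ) 1 := ⟨by linarith [hw.2], by linarith⟩
      have hle : beta (n + 1) (1 - w) ≤ beta n (1 - w) := ih _ hmem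
      have hexp : Real.exp (-(beta n (1 - w))) ≤ Real.exp (-(beta (n + 1) (1 - w))) :=
        Real.exp_le_exp.mpr (by linarith)
      have h3 : 0 ≤ 1 / w := by positivity
      nlinarith

/-- For every fixed `s ∈ (0,1]`, the sequence `(β_n(s))_{n ≥ 0}`
is non-increasing in `n`. -/
theorem stmt6 (s : ℝ) (hs : s ∈ Set.Ioc (0:ℝ) 1) (n : ℕ) :
    beta (n + 1) s ≤ beta n s := by
  exact beta_antitone n s ⟨le_of_lt hs.1, hs.2⟩
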